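/- Every finite dimensional Banach space has the local operator property L_{o,o}-nu: for every ε > 0 and every T ∈ L(X) with v(T) = 1, there is η > 0 such that whenever (x,x*) ∈ Π(X) satisfies |x*(Tx)| > 1 − η, there exists (y,y*) ∈ Π(X) with |y*(Ty)| = 1, ‖y − x‖ < ε, and ‖y* − x*‖ < ε. -/

import Mathlib

noncomputable section

open Filter Topology

variable (𝕜 : Type*) [RCLike 𝕜] (X : Type*) [NormedAddCommGroup X] [NormedSpace 𝕜 X]

/-- `(x, f)` is a state of `X`: `x ∈ S_X`, `f ∈ S_{X*}`, `f x = 1`. -/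
def IsState (x : X) (f : X →L[𝕜] 𝕜) : Prop :=
  ‖x‖ = 1 ∧ ‖f‖ = 1 ∧ f x = 1

/-- The numerical radius `v(T) = sup {|f (T x)| : (x, f) ∈ Π(X)}`. -/
def nrad (T : X →L[𝕜] X) : ℝ :=
  sSup {r : ℝ | ∃ x f, IsState 𝕜 X x f ∧ r = ‖f (T x)‖}

/-- The numerical index `n(X) = inf {v(T) : ‖T‖ = 1}`. -/
def nindex : ℝ :=
  sInf {r : ℝ | ∃ T : X →L[𝕜] X, ‖T‖ = 1 ∧ r = nrad 𝕜 X T}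

/-- every finite dimensional Banach space has the local operator property
L_{o,o}-nu. -/
theorem stmt12 [CompleteSpace X] [FiniteDimensional 𝕜 X] :
    ∀ ε : ℝ, 0 < ε → ∀ T : X →L[𝕜] X, nrad 𝕜 X T = 1 →
      ∃ η : ℝ, 0 < η ∧ ∀ (x : X) (f : X →L[𝕜] 𝕜), IsState 𝕜 X x f →
        1 - η < ‖f (T x)‖ →
        ∃ (y : X) (g : X →L[𝕜] 𝕜), IsState 𝕜 X y g ∧ ‖g (T y)‖ = 1 ∧
          ‖y - x‖ < ε ∧ ‖g - f‖ < ε := by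
  intro ε hε T hT
  by_contra hcon
  push_neg at hcon
  -- extract a sequence of states almost attaining the numerical radius
  have hseq : ∀ n : ℕ, ∃ (x : X) (f : X →L[𝕜] 𝕜), IsState 𝕜 X x f ∧
      1 - 1 / (n + 1) < ‖f (T x)‖ ∧
      ∀ (y : X) (g : X →L[𝕜] 𝕜), IsState 𝕜 X y g → ‖g (T y)‖ = 1 →
        ‖y - x‖ < ε → ε ≤ ‖g - f‖ := by
    intro n
    obtain ⟨x, f, h1, h2, h3⟩ := hcon (1 / (n + 1)) (by positivity)
    exact ⟨x, f, h1, h2, h3⟩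
  choose x f hstate hbig hfar using hseq
  haveI : ProperSpace X := FiniteDimensional.proper 𝕜 X
  haveI : FiniteDimensional 𝕜 (X →L[𝕜] 𝕜) := inferInstance
  haveI : ProperSpace (X →L[𝕜] 𝕜) := FiniteDimensional.proper 𝕜 _
  -- compactness of the product of spheres
  have hK : IsCompact ((Metric.sphere (0 : X) 1) ×ˢ
      (Metric.sphere (0 : X →L[𝕜] 𝕜) 1)) :=
    (isCompact_sphere _ _).prod (isCompact_sphere _ _)
  have hmem : ∀ n, (x n, f n) ∈ (Metric.sphere (0 : X) 1) ×ˢ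
      (Metric.sphere (0 : X →L[𝕜] 𝕜) 1) := by
    intro n
    exact ⟨by simpa using (hstate n).1, by simpa using (hstate n).2.1⟩
  obtain ⟨p, hp, φ, hφ, hlim⟩ := hK.tendsto_subseq hmem
  obtain ⟨x₀, f₀⟩ := p
  have hx₀ : ‖x₀‖ = 1 := by simpa using hp.1
  have hf₀ : ‖f₀‖ = 1 := by simpa using hp.2
  have hlimx : Tendsto (fun n => x (φ n)) atTop (𝓝 x₀) :=
    (continuous_fst.tendsto _).comp hlim
  have hlimf : Tendsto (fun n => f (φ n)) atTop (𝓝 f₀) :=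
    (continuous_snd.tendsto _).comp hlim
  -- evaluation is jointly continuous
  have heval : Tendsto (fun n => (f (φ n)) (x (φ n))) atTop (𝓝 (f₀ x₀)) := by
    have hc : Continuous fun q : (X →L[𝕜] 𝕜) × X => q.1 q.2 :=
      isBoundedBilinearMap_apply.continuous
    exact (hc.tendsto (f₀, x₀)).comp (hlimf.prodMk_nhds hlimx)
  have hf₀x₀ : f₀ x₀ = 1 := by
    have : Tendsto (fun n => (f (φ n)) (x (φ n))) atTop (𝓝 (1 : 𝕜)) := by
      simp only [fun n => (hstate (φ n)).2.2]; exact tendsto_const_nhds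
    exact tendsto_nhds_unique heval this
  have hstate₀ : IsState 𝕜 X x₀ f₀ := ⟨hx₀, hf₀, hf₀x₀⟩
  -- |f₀ (T x₀)| = 1
  have hevalT : Tendsto (fun n => ‖(f (φ n)) (T (x (φ n)))‖) atTop (𝓝 ‖f₀ (T x₀)‖) := by
    have hc : Continuous fun q : (X →L[𝕜] 𝕜) × X => ‖q.1 (T q.2)‖ :=
      (isBoundedBilinearMap_apply.continuous.comp
        (continuous_fst.prodMk (T.continuous.comp continuous_snd))).norm
    exact (hc.tendsto (f₀, x₀)).comp (hlimf.prodMk_nhds hlimx)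
  have hge : (1 : ℝ) ≤ ‖f₀ (T x₀)‖ := by
    have h1 : Tendsto (fun n : ℕ => 1 - 1 / ((n : ℝ) + 1)) atTop (𝓝 1) := by
      have := tendsto_one_div_add_atTop_nhds_zero_nat (𝕜 := ℝ)
      simpa using (tendsto_const_nhds (x := (1 : ℝ))).sub this
    refine le_of_tendsto_of_tendsto' h1 hevalT fun n => ?_
    have hφn : (n : ℝ) + 1 ≤ (φ n : ℝ) + 1 := by
      exact_mod_cast Nat.succ_le_succ hφ.le_apply
    have h2 : 1 - 1 / ((n : ℝ) + 1) ≤ 1 - 1 / ((φ n : ℝ) + 1) := by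
      have := one_div_le_one_div_of_le (by positivity) hφn
      linarith
    exact h2.trans (hbig (φ n)).le
  have hle : ‖f₀ (T x₀)‖ ≤ 1 := by
    have hbdd : BddAbove {r : ℝ | ∃ x f, IsState 𝕜 X x f ∧ r = ‖f (T x)‖} := by
      refine ⟨‖T‖, ?_⟩
      rintro r ⟨y, g, hyg, rfl⟩
      calc ‖g (T y)‖ ≤ ‖g‖ * ‖T y‖ := g.le_opNorm _
        _ = ‖T y‖ := by rw [hyg.2.1, one_mul]
        _ ≤ ‖T‖ * ‖y‖ := T.le_opNorm _
        _ = ‖T‖ := by rw [hyg.1, mul_one]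
    have := le_csSup hbdd ⟨x₀, f₀, hstate₀, rfl⟩
    rwa [← nrad, hT] at this
  have habs : ‖f₀ (T x₀)‖ = 1 := le_antisymm hle hge
  -- get contradiction using closeness
  have hεx : ∀ᶠ n in atTop, ‖x₀ - x (φ n)‖ < ε := by
    have := (tendsto_iff_norm_sub_tendsto_zero.1 hlimx)
    have h2 : Tendsto (fun n => ‖x₀ - x (φ n)‖) atTop (𝓝 0) := by
      simpa [norm_sub_rev] using this
    exact (h2.eventually (eventually_lt_nhds hε))
  have hεf : ∀ᶠ n in atTop, ‖f₀ - f (φ n)‖ < ε := by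
    have := (tendsto_iff_norm_sub_tendsto_zero.1 hlimf)
    have h2 : Tendsto (fun n => ‖f₀ - f (φ n)‖) atTop (𝓝 0) := by
      simpa [norm_sub_rev] using this
    exact (h2.eventually (eventually_lt_nhds hε))
  obtain ⟨n, hn1, hn2⟩ := (hεx.and hεf).exists
  exact absurd (hfar (φ n) x₀ f₀ hstate₀ habs hn1) (not_le.2 hn2)
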